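/- Let S be a Polish space, let R ⊆ S × S be any relation, let μ, ν be Borel probability measures on S, and let φ : S → [0,1] be Borel measurable with φ(x) − φ(y) ≤ 1 − 𝟏_R(x,y) for all x, y ∈ S. For t ∈ (0,1] set A_t := {x ∈ S : φ(x) ≥ t}. Then each A_t belongs to R*, the map t ↦ μ(A_t) − ν(A_t) satisfies ∫ φ dμ − ∫ φ dν = ∫_0^1 (μ(A_t) − ν(A_t)) dt, and consequently ∫ φ dμ − ∫ φ dν ≤ sup_{A ∈ R*} (μ(A) − ν(A)). -/

import Mathlib

open MeasureTheory

lemma aux_integrable_meas {S : Type*} [MeasurableSpace S]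
    (μ : Measure S) [IsProbabilityMeasure μ] (φ : S → ℝ) :
    IntegrableOn (fun t : ℝ => (μ {x : S | t ≤ φ x}).toReal) (Set.Ioc (0:ℝ) 1) := by
  have hmeas : Measurable (fun t : ℝ => (μ {x : S | t ≤ φ x}).toReal) := by
    refine Measurable.ennreal_toReal ?_
    exact Antitone.measurable (fun s t hst => measure_mono (fun x hx => le_trans hst hx))
  refine Integrable.mono' (integrable_const (1:ℝ)) hmeas.aestronglyMeasurable ?_
  refine Filter.Eventually.of_forall (fun t => ?_)
  rw [Real.norm_eq_abs, abs_of_nonneg ENNReal.toReal_nonneg]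
  exact ENNReal.toReal_le_of_le_ofReal zero_le_one (by simpa using prob_le_one)

/-- Layer-cake conversion of a `[0,1]`-valued dual potential into indicator potentials:
each super-level set `A_t` is a monotone Borel set, the dual objective of `φ` equals the
integral over `t ∈ (0,1]` of the objectives of the `A_t`, and hence is at most the
supremum of the objectives over monotone Borel sets. -/
theorem layer_cake_indicator_conversion
    {S : Type*} [TopologicalSpace S] [PolishSpace S] [MeasurableSpace S] [BorelSpace S]
    (R : Set (S × S))
    (μ ν : Measure S) [IsProbabilityMeasure μ] [IsProbabilityMeasure ν]
    (φ : S → ℝ) (hφm : Measurable φ) (hφ0 : ∀ x, 0 ≤ φ x) (hφ1 : ∀ x, φ x ≤ 1)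
    (hconstr : ∀ x y : S, φ x - φ y ≤ 1 - Set.indicator R (fun _ => (1 : ℝ)) (x, y)) :
    (∀ t : ℝ, t ∈ Set.Ioc (0 : ℝ) 1 →
      MeasurableSet {x : S | t ≤ φ x} ∧
        ∀ x y : S, x ∈ {x : S | t ≤ φ x} → (x, y) ∈ R → y ∈ {x : S | t ≤ φ x}) ∧
    (∫ x, φ x ∂μ - ∫ x, φ x ∂ν =
      ∫ t in Set.Ioc (0 : ℝ) 1,
        ((μ {x : S | t ≤ φ x}).toReal - (ν {x : S | t ≤ φ x}).toReal)) ∧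
    (∫ x, φ x ∂μ - ∫ x, φ x ∂ν ≤
      ⨆ A : {A : Set S // MeasurableSet A ∧ ∀ x y : S, x ∈ A → (x, y) ∈ R → y ∈ A},
        ((μ A.1).toReal - (ν A.1).toReal)) := by
  -- Part 1
  have part1 : ∀ t : ℝ, t ∈ Set.Ioc (0 : ℝ) 1 →
      MeasurableSet {x : S | t ≤ φ x} ∧
        ∀ x y : S, x ∈ {x : S | t ≤ φ x} → (x, y) ∈ R → y ∈ {x : S | t ≤ φ x} := by
    intro t _
    refine ⟨measurableSet_le measurable_const hφm, fun x y hx hxy => ?_⟩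
    have h := hconstr x y
    rw [Set.indicator_of_mem hxy] at h
    simp only [Set.mem_setOf_eq] at hx ⊢
    linarith
  -- integrability of φ
  have hint : ∀ (κ : Measure S), IsProbabilityMeasure κ → Integrable φ κ := by
    intro κ hκ
    refine Integrable.mono' (integrable_const (1:ℝ)) hφm.aestronglyMeasurable ?_
    exact Filter.Eventually.of_forall
      (fun x => by rw [Real.norm_eq_abs, abs_of_nonneg (hφ0 x)]; exact hφ1 x)
  have layμ := (hint μ inferInstance).integral_eq_integral_Ioc_meas_le
    (Filter.Eventually.of_forall hφ0) (Filter.Eventually.of_forall hφ1)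
  have layν := (hint ν inferInstance).integral_eq_integral_Ioc_meas_le
    (Filter.Eventually.of_forall hφ0) (Filter.Eventually.of_forall hφ1)
  have part2 : ∫ x, φ x ∂μ - ∫ x, φ x ∂ν =
      ∫ t in Set.Ioc (0 : ℝ) 1,
        ((μ {x : S | t ≤ φ x}).toReal - (ν {x : S | t ≤ φ x}).toReal) := by
    rw [layμ, layν, integral_sub (aux_integrable_meas μ φ) (aux_integrable_meas ν φ)]
    rfl
  refine ⟨part1, part2, ?_⟩
  -- Part 3
  set I : Type _ := {A : Set S // MeasurableSet A ∧ ∀ x y : S, x ∈ A → (x, y) ∈ R → y ∈ A}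
  have hne : Nonempty I := ⟨⟨Set.univ, MeasurableSet.univ, fun _ _ _ _ => trivial⟩⟩
  have hbdd : BddAbove (Set.range fun A : I => (μ A.1).toReal - (ν A.1).toReal) := by
    refine ⟨1, fun r ⟨A, hA⟩ => ?_⟩
    rw [← hA]; dsimp only
    have h1 : (μ A.1).toReal ≤ 1 := ENNReal.toReal_le_of_le_ofReal zero_le_one
      (by simpa using prob_le_one)
    have h2 : 0 ≤ (ν A.1).toReal := ENNReal.toReal_nonneg
    linarith
  set M := ⨆ A : I, ((μ A.1).toReal - (ν A.1).toReal) with hM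
  rw [part2]
  have hle : ∀ t ∈ Set.Ioc (0:ℝ) 1,
      (μ {x : S | t ≤ φ x}).toReal - (ν {x : S | t ≤ φ x}).toReal ≤ M := by
    intro t ht
    obtain ⟨hm, hmono⟩ := part1 t ht
    exact le_ciSup hbdd (⟨{x : S | t ≤ φ x}, hm, hmono⟩ : I)
  calc ∫ t in Set.Ioc (0 : ℝ) 1,
        ((μ {x : S | t ≤ φ x}).toReal - (ν {x : S | t ≤ φ x}).toReal)
      ≤ ∫ _t in Set.Ioc (0 : ℝ) 1, M := by
        refine setIntegral_mono_on
          ((aux_integrable_meas μ φ).sub (aux_integrable_meas ν φ))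
          ((integrableOn_const_iff).mpr (Or.inr (by simp))) measurableSet_Ioc hle
    _ = M := by simp
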